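/- The number of type B basic triples (k,p,q) with max{p+k-1, q+k-1} ≤ n equals (2n³ + n)/3. -/

import Mathlib

/-- A permutation of `ℤ` is a signed permutation if it is odd: `w(-i) = -w(i)`. -/
def IsSigned (w : Equiv.Perm ℤ) : Prop := ∀ i : ℤ, w (-i) = -(w i)

/-- `w` fixes every integer `m` with `|m| > N` (i.e. `w` lies in `W_N`, resp. `S` supported there). -/
def FixesBeyond (N : ℤ) (w : Equiv.Perm ℤ) : Prop := ∀ m : ℤ, N < |m| → w m = m

/-- Word length of `g` with respect to a generating set `S`. -/
noncomputable def wlen (S : Set (Equiv.Perm ℤ)) (g : Equiv.Perm ℤ) : ℕ :=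
  sInf {m | ∃ l : List (Equiv.Perm ℤ), l.length = m ∧ (∀ x ∈ l, x ∈ S) ∧ l.prod = g}

/-- Bruhat order for the group generated by `S`: the reflexive-transitive closure of
multiplying on the right by a reflection (a conjugate, by an element of the generated
subgroup, of a generator) while increasing the word length. -/
def bruhatLe (S : Set (Equiv.Perm ℤ)) (u v : Equiv.Perm ℤ) : Prop :=
  Relation.ReflTransGen
    (fun x y => (∃ g ∈ Subgroup.closure S, ∃ s ∈ S, y = x * (g * s * g⁻¹)) ∧
      wlen S x < wlen S y) u v

/-- The simple generators of the type B Weyl group `W_n`, as permutations of `ℤ`. -/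
def BGens (n : ℤ) : Set (Equiv.Perm ℤ) :=
  {Equiv.swap 1 (-1)} ∪
    {x | ∃ i : ℤ, 1 ≤ i ∧ i < n ∧ x = Equiv.swap i (i + 1) * Equiv.swap (-i) (-(i + 1))}

/-- The simple generators of the infinite signed permutation group `W_∞`. -/
def BGensInf : Set (Equiv.Perm ℤ) :=
  {Equiv.swap 1 (-1)} ∪
    {x | ∃ i : ℤ, 1 ≤ i ∧ x = Equiv.swap i (i + 1) * Equiv.swap (-i) (-(i + 1))}

/-- Adjacent transpositions `(i, i+1)` for `a ≤ i < b`: simple generators of the symmetric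
group on `{a, ..., b}`. -/
def AGens (a b : ℤ) : Set (Equiv.Perm ℤ) :=
  {x | ∃ i : ℤ, a ≤ i ∧ i < b ∧ x = Equiv.swap i (i + 1)}

/-- The length of a signed permutation in `W_n`, by the inversion-count formula. -/
noncomputable def lenCount (n : ℤ) (w : Equiv.Perm ℤ) : ℕ :=
  {x : ℤ × ℤ | 0 < x.1 ∧ x.1 < x.2 ∧ x.2 ≤ n ∧ w x.2 < w x.1}.ncard +
  {x : ℤ × ℤ | 0 < x.1 ∧ x.1 ≤ x.2 ∧ x.2 ≤ n ∧ w x.1 + w x.2 < 0}.ncard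

/-- The length of a signed permutation in `W_∞`, by the inversion-count formula. -/
noncomputable def lenCountInf (w : Equiv.Perm ℤ) : ℕ :=
  {x : ℤ × ℤ | 0 < x.1 ∧ x.1 < x.2 ∧ w x.2 < w x.1}.ncard +
  {x : ℤ × ℤ | 0 < x.1 ∧ x.1 ≤ x.2 ∧ w x.1 + w x.2 < 0}.ncard

/-- Type B rank function `r_w(p,q) = #{i ≥ p : w(i) ≤ -q}`. -/
noncomputable def rB (p q : ℤ) (w : Equiv.Perm ℤ) : ℤ :=
  ({i : ℤ | p ≤ i ∧ w i ≤ -q}.ncard : ℤ)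

/-- Type B rank function with the bound `i ≤ n`: `r_w(p,q) = #{p ≤ i ≤ n : w(i) ≤ -q}`. -/
noncomputable def rBn (n p q : ℤ) (w : Equiv.Perm ℤ) : ℤ :=
  ({i : ℤ | p ≤ i ∧ i ≤ n ∧ w i ≤ -q}.ncard : ℤ)

/-- Type A rank function `r_v(p,q) = #{1 ≤ i ≤ p : v(i) > q}`. -/
noncomputable def rA (p q : ℤ) (v : Equiv.Perm ℤ) : ℤ :=
  ({i : ℤ | 1 ≤ i ∧ i ≤ p ∧ q < v i}.ncard : ℤ)

/-- Rank function `r_v(p,q) = #{i ≤ -p : v(i) ≥ q}` (for permutations of `{-n,...,n}`). -/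
noncomputable def rAneg (p q : ℤ) (v : Equiv.Perm ℤ) : ℤ :=
  ({i : ℤ | i ≤ -p ∧ q ≤ v i}.ncard : ℤ)

/-- A type B basic triple. -/
def BasicB (k p q : ℤ) : Prop :=
  0 < k ∧ 1 - p - q < k ∧ 0 < p ∧ q ≠ 0 ∧ (p = 1 → 0 < q)

/-- The basic (bigrassmannian) permutation `v(k,p,q)` of type A, with one-line notation
`1, ..., p-k, q+1, ..., q+k, p-k+1, ..., q`, as a function on `ℤ`. -/
def vAfun (k p q i : ℤ) : ℤ :=
  if i ≤ p - k then i else if i ≤ p then q + (i - (p - k))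
  else if i ≤ q + k then i - k else i

/-- `w0` is the minimum, in Bruhat order on `W_∞`, among signed permutations `w`
with `r_w(p,q) ≥ k`: i.e. the basic signed permutation `w(k,p,q)`. -/
def IsMinB (k p q : ℤ) (w0 : Equiv.Perm ℤ) : Prop :=
  IsSigned w0 ∧ (∃ N : ℤ, FixesBeyond N w0) ∧ k ≤ rB p q w0 ∧
    ∀ w : Equiv.Perm ℤ, IsSigned w → (∃ N : ℤ, FixesBeyond N w) → k ≤ rB p q w →
      bruhatLe BGensInf w0 w


private noncomputable def Tset (N : ℕ) : Finset ((_ : ℕ) × ℤ × ℤ) :=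
  (Finset.range N).sigma (fun j => Finset.Icc 1 ((j : ℤ) + 1) ×ˢ Finset.Icc 1 ((j : ℤ) + 1))

private lemma Tset_card (N : ℕ) :
    (Tset N).card = ∑ j ∈ Finset.range N, (j + 1) * (j + 1) := by
  rw [Tset, Finset.card_sigma]
  refine Finset.sum_congr rfl fun j _ => ?_
  rw [Finset.card_product, Int.card_Icc]
  have : ((j : ℤ) + 1 + 1 - 1).toNat = j + 1 := by omega
  rw [this]

private lemma sumsq (N : ℕ) :
    6 * ∑ j ∈ Finset.range N, (j + 1) * (j + 1) = N * (N + 1) * (2 * N + 1) := by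
  induction N with
  | zero => simp
  | succ m ih => rw [Finset.sum_range_succ, Nat.mul_add, ih]; ring

theorem stmt9 (n : ℕ) :
    3 * {t : ℤ × ℤ × ℤ | BasicB t.1 t.2.1 t.2.2 ∧
        max (t.2.1 + t.1 - 1) (t.2.2 + t.1 - 1) ≤ (n : ℤ)}.ncard = 2 * n ^ 3 + n := by
  classical
  set F : Finset (ℤ × ℤ × ℤ) :=
    (Finset.Icc 1 (n : ℤ) ×ˢ Finset.Icc 1 (n : ℤ) ×ˢ Finset.Icc (1 - (n : ℤ)) (n : ℤ)).filter
      (fun t => BasicB t.1 t.2.1 t.2.2 ∧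
        max (t.2.1 + t.1 - 1) (t.2.2 + t.1 - 1) ≤ (n : ℤ)) with hF
  have hset : {t : ℤ × ℤ × ℤ | BasicB t.1 t.2.1 t.2.2 ∧
      max (t.2.1 + t.1 - 1) (t.2.2 + t.1 - 1) ≤ (n : ℤ)} = ↑F := by
    ext ⟨k, p, q⟩
    simp only [hF, Set.mem_setOf_eq, Finset.coe_filter, Finset.mem_product, Finset.mem_Icc,
      BasicB, max_le_iff]
    omega
  rw [hset, Set.ncard_coe_finset]
  have hsplit := Finset.card_filter_add_card_filter_not
    (s := F) (p := fun t => 0 < t.2.2)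
  have hpos : (F.filter (fun t => 0 < t.2.2)).card = (Tset n).card := by
    refine Finset.card_nbij' (fun t => ⟨((n : ℤ) - t.1).toNat, (t.2.1, t.2.2)⟩)
      (fun x => ((n : ℤ) - x.1, x.2.1, x.2.2)) ?_ ?_ ?_ ?_
    · rintro ⟨k, p, q⟩ ht
      simp only [hF, Finset.mem_coe, Finset.mem_filter, Finset.mem_product, Finset.mem_Icc, BasicB,
        max_le_iff, Tset, Finset.mem_sigma, Finset.mem_range] at ht ⊢
      omega
    · rintro ⟨a, p, q⟩ hx
      simp only [hF, Finset.mem_coe, Finset.mem_filter, Finset.mem_product, Finset.mem_Icc, BasicB,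
        max_le_iff, Tset, Finset.mem_sigma, Finset.mem_range] at hx ⊢
      omega
    · rintro ⟨k, p, q⟩ ht
      simp only [hF, Finset.mem_coe, Finset.mem_filter, Finset.mem_product, Finset.mem_Icc, BasicB,
        max_le_iff] at ht
      simp only [Prod.mk.injEq, and_true, true_and]
      omega
    · rintro ⟨a, p, q⟩ hx
      simp only [Tset, Finset.mem_coe, Finset.mem_sigma, Finset.mem_range, Finset.mem_product,
        Finset.mem_Icc] at hx
      have h1 : ((n : ℤ) - ((n : ℤ) - (a : ℤ))).toNat = a := by omega
      simp [h1]
  have hneg : (F.filter (fun t => ¬ 0 < t.2.2)).card = (Tset (n - 1)).card := by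
    refine Finset.card_nbij' (fun t => ⟨(t.1 + t.2.1 - 3).toNat, (t.1, -t.2.2)⟩)
      (fun x => (x.2.1, (x.1 : ℤ) + 3 - x.2.1, -x.2.2)) ?_ ?_ ?_ ?_
    · rintro ⟨k, p, q⟩ ht
      simp only [hF, Finset.mem_coe, Finset.mem_filter, Finset.mem_product, Finset.mem_Icc, BasicB,
        max_le_iff, Tset, Finset.mem_sigma, Finset.mem_range, not_lt] at ht ⊢
      omega
    · rintro ⟨a, k, m⟩ hx
      simp only [hF, Finset.mem_coe, Finset.mem_filter, Finset.mem_product, Finset.mem_Icc, BasicB,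
        max_le_iff, Tset, Finset.mem_sigma, Finset.mem_range, not_lt] at hx ⊢
      omega
    · rintro ⟨k, p, q⟩ ht
      simp only [hF, Finset.mem_coe, Finset.mem_filter, Finset.mem_product, Finset.mem_Icc, BasicB,
        max_le_iff, not_lt] at ht
      simp only [Prod.mk.injEq, neg_neg, and_true, true_and]
      omega
    · rintro ⟨a, k, m⟩ hx
      simp only [Tset, Finset.mem_coe, Finset.mem_sigma, Finset.mem_range, Finset.mem_product,
        Finset.mem_Icc] at hx
      have h1 : (k + ((a : ℤ) + 3 - k) - 3).toNat = a := by omega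
      simp [h1]
  rw [← hsplit, hpos, hneg, Tset_card, Tset_card]
  cases n with
  | zero => simp
  | succ m =>
    have h1 := sumsq (m + 1)
    have h2 := sumsq m
    simp only [Nat.add_sub_cancel]
    set A := ∑ j ∈ Finset.range (m + 1), (j + 1) * (j + 1) with hA
    set B := ∑ j ∈ Finset.range m, (j + 1) * (j + 1) with hB
    have key : 2 * (3 * (A + B)) = 2 * (2 * (m + 1) ^ 3 + (m + 1)) := by
      have h6 : 2 * (3 * (A + B)) = 6 * A + 6 * B := by ring
      rw [h6, h1, h2]; ring
    exact Nat.eq_of_mul_eq_mul_left (by norm_num) key
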